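/- For 0 < σ < π and real s > 1, η_CB(s; sin(σ/2)) = (π/Γ(s−1)) ∫_0^σ (−2 log(sin(θ/2)/sin(σ/2)))^{s−2} dθ, where η_CB(s;z) = Σ_{m=0}^∞ (2z)^{2m+1}/(binom(2m+1,m+1/2)(m+1/2)^s) with binom(2m+1,m+1/2) = Γ(2m+2)/Γ(m+3/2)². -/

import Mathlib

open Real MeasureTheory Set

/-- The half-integer binomial coefficient `binom(2m+1, m+1/2) = Γ(2m+2)/Γ(m+3/2)²`. -/
noncomputable def halfBinom (m : ℕ) : ℝ :=
  Real.Gamma (2 * m + 2) / (Real.Gamma ((m : ℝ) + 3 / 2)) ^ 2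


/-- coefficients of the series for `1/√(1-x)` -/
noncomputable def etaC (m : ℕ) : ℝ := Real.Gamma ((m : ℝ) + 1 / 2) / (Real.sqrt π * m.factorial)

lemma etaC_pos (m : ℕ) : 0 < etaC m := by
  unfold etaC
  have h1 : 0 < Real.Gamma ((m : ℝ) + 1 / 2) := Real.Gamma_pos_of_pos (by positivity)
  have h2 : (0:ℝ) < m.factorial := by exact_mod_cast m.factorial_pos
  positivity

lemma etaC_succ (m : ℕ) : ((m : ℝ) + 1) * etaC (m + 1) = ((m : ℝ) + 1 / 2) * etaC m := by
  unfold etaC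
  have h1 : Real.Gamma (((m + 1 : ℕ) : ℝ) + 1 / 2) = ((m : ℝ) + 1 / 2) * Real.Gamma ((m : ℝ) + 1 / 2) := by
    rw [show (((m + 1 : ℕ) : ℝ) + 1 / 2) = ((m : ℝ) + 1 / 2) + 1 by push_cast; ring,
      Real.Gamma_add_one (by positivity)]
  rw [h1]
  have h2 : ((m + 1 : ℕ).factorial : ℝ) = ((m : ℝ) + 1) * m.factorial := by
    rw [Nat.factorial_succ]; push_cast; ring
  rw [h2]
  have h3 : (0:ℝ) < m.factorial := by exact_mod_cast m.factorial_pos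
  have h4 : Real.sqrt π ≠ 0 := by positivity
  field_simp

lemma etaC_zero : etaC 0 = 1 := by
  unfold etaC
  norm_num [Real.Gamma_one_half_eq]
  exact (Real.sqrt_pos.2 Real.pi_pos).ne'

lemma etaC_le_one (m : ℕ) : etaC m ≤ 1 := by
  induction m with
  | zero => rw [etaC_zero]
  | succ n ih =>
    have h := etaC_succ n
    have h1 : etaC (n + 1) = ((n : ℝ) + 1 / 2) / ((n : ℝ) + 1) * etaC n := by
      field_simp at h ⊢; linarith
    rw [h1]
    have : ((n : ℝ) + 1 / 2) / ((n : ℝ) + 1) ≤ 1 := by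
      rw [div_le_one (by positivity)]; linarith
    calc ((n : ℝ) + 1 / 2) / ((n : ℝ) + 1) * etaC n ≤ 1 * etaC n := by
          exact mul_le_mul_of_nonneg_right this (etaC_pos n).le
      _ ≤ 1 := by rw [one_mul]; exact ih

lemma etaSummable_aux {y : ℝ} (hy : |y| < 1) (p : ℕ → ℝ) (hp : ∀ n, |p n| ≤ 2 * n + 1) :
    Summable (fun n => p n * (etaC n * y ^ n)) := by
  have hmaj : Summable (fun n : ℕ => 2 * ((n : ℝ) * |y| ^ n) + |y| ^ n) := by
    have h1 : Summable (fun n : ℕ => (n : ℝ) * |y| ^ n) := by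
      simpa using summable_pow_mul_geometric_of_norm_lt_one (R := ℝ) 1 (r := |y|)
        (by rwa [Real.norm_eq_abs, abs_abs])
    exact ((h1.mul_left 2).add (summable_geometric_of_lt_one (abs_nonneg y) hy))
  refine Summable.of_norm_bounded hmaj (fun n => ?_)
  have h1 : ‖p n * (etaC n * y ^ n)‖ = |p n| * (etaC n * |y| ^ n) := by
    rw [Real.norm_eq_abs, abs_mul, abs_mul, abs_pow, abs_of_pos (etaC_pos n)]
  rw [h1]
  have h2 : |p n| * (etaC n * |y| ^ n) ≤ (2 * n + 1) * (1 * |y| ^ n) := by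
    apply mul_le_mul (hp n)
    · exact mul_le_mul_of_nonneg_right (etaC_le_one n) (by positivity)
    · have := etaC_pos n; positivity
    · positivity
  calc |p n| * (etaC n * |y| ^ n) ≤ (2 * n + 1) * (1 * |y| ^ n) := h2
    _ = 2 * ((n : ℝ) * |y| ^ n) + |y| ^ n := by ring

noncomputable def etaS (y : ℝ) : ℝ := ∑' n : ℕ, etaC n * y ^ n

lemma etaS_summable {y : ℝ} (hy : |y| < 1) : Summable (fun n => etaC n * y ^ n) := by
  have := etaSummable_aux hy (fun _ => 1)
    (fun n => by rw [abs_one]; have : (0:ℝ) ≤ n := Nat.cast_nonneg n; linarith)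
  simpa using this

lemma etaS1_summable {y : ℝ} (hy : |y| < 1) :
    Summable (fun n : ℕ => ((n : ℝ) + 1 / 2) * (etaC n * y ^ n)) :=
  etaSummable_aux hy (fun n => (n : ℝ) + 1 / 2)
    (fun n => by rw [abs_of_pos (by positivity)]; have : (0:ℝ) ≤ n := Nat.cast_nonneg n; linarith)

lemma etaS_hasDeriv {y : ℝ} (hy : |y| < 1) :
    HasDerivAt etaS (∑' n : ℕ, ((n : ℝ) + 1 / 2) * (etaC n * y ^ n)) y := by
  set r := (|y| + 1) / 2 with hrdef
  have hy0 : 0 ≤ |y| := abs_nonneg y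
  have hr0 : 0 < r := by rw [hrdef]; linarith
  have hyr : |y| < r := by rw [hrdef]; linarith
  have hr1 : r < 1 := by rw [hrdef]; linarith
  have hu : Summable (fun n : ℕ => (n : ℝ) * r ^ (n - 1)) := by
    apply (summable_nat_add_iff 1).1
    have h1 : Summable (fun n : ℕ => (n : ℝ) * r ^ n) := by
      simpa using summable_pow_mul_geometric_of_norm_lt_one (R := ℝ) 1 (r := r)
        (by rw [Real.norm_eq_abs, abs_of_pos hr0]; exact hr1)
    have h2 : Summable (fun n : ℕ => r ^ n) := summable_geometric_of_lt_one hr0.le hr1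
    have := h1.add h2
    apply this.congr
    intro n
    simp only [Nat.add_sub_cancel]
    push_cast
    ring
  have hD : HasDerivAt (fun z => ∑' n : ℕ, etaC n * z ^ n)
      (∑' n : ℕ, etaC n * ((n : ℝ) * y ^ (n - 1))) y := by
    refine hasDerivAt_tsum_of_isPreconnected hu (isOpen_Ioo (a := -r) (b := r))
      (convex_Ioo _ _).isPreconnected
      (fun n w _ => (hasDerivAt_pow n w).const_mul (etaC n))
      (fun n w hw => ?_) (y₀ := 0) ⟨by linarith, hr0⟩
      ?_ (abs_lt.1 hyr)
    · have hwr : |w| ≤ r := (abs_lt.2 ⟨hw.1, hw.2⟩).le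
      rw [Real.norm_eq_abs, abs_mul, abs_mul, abs_pow]
      have h1 : |etaC n| ≤ 1 := by rw [abs_of_pos (etaC_pos n)]; exact etaC_le_one n
      have h2 : |w| ^ (n-1) ≤ r ^ (n-1) := pow_le_pow_left₀ (abs_nonneg w) hwr _
      calc |etaC n| * (|(n:ℝ)| * |w| ^ (n-1)) ≤ 1 * (|(n:ℝ)| * r ^ (n-1)) := by
            apply mul_le_mul h1 (by
              apply mul_le_mul_of_nonneg_left h2 (abs_nonneg _)) (by positivity) one_pos.le
        _ = (n:ℝ) * r ^ (n-1) := by rw [one_mul, Nat.abs_cast]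
    · apply summable_of_ne_finset_zero (s := {0})
      intro n hn
      simp only [Finset.mem_singleton] at hn
      rw [zero_pow hn, mul_zero]
  have key : ∀ n : ℕ, etaC (n + 1) * (((n + 1 : ℕ) : ℝ) * y ^ ((n + 1) - 1))
      = ((n : ℝ) + 1 / 2) * (etaC n * y ^ n) := by
    intro n
    have := etaC_succ n
    push_cast
    linear_combination y ^ n * this
  have ha : HasSum (fun n => etaC n * ((n : ℝ) * y ^ (n - 1)))
      (∑' n : ℕ, ((n : ℝ) + 1 / 2) * (etaC n * y ^ n)) := by
    apply (hasSum_nat_add_iff' 1).1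
    simp only [Finset.range_one, Finset.sum_singleton, Nat.cast_zero, zero_mul, mul_zero, sub_zero]
    exact HasSum.congr_fun ((etaS1_summable hy).hasSum) key
  rw [ha.tsum_eq] at hD
  exact hD

lemma etaS_ode {y : ℝ} (hy : |y| < 1) :
    etaS y = 2 * (1 - y) * ∑' n : ℕ, ((n : ℝ) + 1 / 2) * (etaC n * y ^ n) := by
  set S₁ := ∑' n : ℕ, ((n : ℝ) + 1 / 2) * (etaC n * y ^ n) with hS₁def
  have hb : HasSum (fun n : ℕ => (2 * (n : ℝ) + 1) * (etaC n * y ^ n)) (2 * S₁) := by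
    apply HasSum.congr_fun ((etaS1_summable hy).hasSum.mul_left 2)
    intro n; ring
  have hBs : HasSum (fun n : ℕ => (2 * (n : ℝ) + 1) * (etaC n * y ^ n) * y) (2 * S₁ * y) :=
    hb.mul_right y
  have hB : HasSum (fun n : ℕ => 2 * (n : ℝ) * (etaC n * y ^ n)) (2 * S₁ * y) := by
    apply (hasSum_nat_add_iff' 1).1
    simp only [Finset.range_one, Finset.sum_singleton, Nat.cast_zero, mul_zero, zero_mul, sub_zero]
    apply HasSum.congr_fun hBs
    intro n
    have := etaC_succ n
    push_cast
    linear_combination 2 * y ^ (n + 1) * this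
  have hsub : HasSum (fun n => etaC n * y ^ n) (2 * S₁ - 2 * S₁ * y) := by
    have := hb.sub hB
    apply HasSum.congr_fun this
    intro n; ring
  rw [etaS, hsub.tsum_eq]; ring

lemma etaS_eq_sqrt {x : ℝ} (h0 : 0 ≤ x) (h1 : x < 1) :
    HasSum (fun m => etaC m * x ^ m) (1 / Real.sqrt (1 - x)) := by
  have hxabs : |x| < 1 := abs_lt.2 ⟨by linarith, h1⟩
  have hsum := etaS_summable hxabs
  rw [hsum.hasSum_iff]
  set g := fun y => etaS y * Real.sqrt (1 - y) with hgdef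
  have claim : ∀ y ∈ Icc (0:ℝ) x, HasDerivAt g 0 y := by
    intro y hy
    have hy1 : |y| < 1 := abs_lt.2 ⟨by linarith [hy.1], by linarith [hy.2]⟩
    have hs1 : (0:ℝ) < 1 - y := by
      have : y < 1 := by linarith [hy.2]
      linarith
    have hS := etaS_hasDeriv hy1
    have hsq : HasDerivAt (fun t => Real.sqrt (1 - t)) (1 / (2 * Real.sqrt (1 - y)) * (-1)) y := by
      have hinner : HasDerivAt (fun t : ℝ => 1 - t) (-1) y := by
        simpa using (hasDerivAt_id y).const_sub 1
      exact (Real.hasDerivAt_sqrt hs1.ne').comp y hinner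
    have hmul := hS.mul hsq
    have hzero : (∑' n : ℕ, ((n : ℝ) + 1 / 2) * (etaC n * y ^ n)) * Real.sqrt (1 - y)
        + etaS y * (1 / (2 * Real.sqrt (1 - y)) * (-1)) = 0 := by
      rw [etaS_ode hy1]
      set S₁ := ∑' n : ℕ, ((n : ℝ) + 1 / 2) * (etaC n * y ^ n) with hS1def
      clear_value S₁
      have hsp : 0 < Real.sqrt (1 - y) := Real.sqrt_pos.2 hs1
      have hss : Real.sqrt (1 - y) * Real.sqrt (1 - y) = 1 - y := Real.mul_self_sqrt hs1.le
      have hss' : Real.sqrt (1 - y) ^ 2 = 1 - y := Real.sq_sqrt hs1.le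
      field_simp
      linear_combination S₁ * hss'
    rw [← hzero]
    exact hmul
  have hcont : ContinuousOn g (Icc 0 x) := fun y hy =>
    ((claim y hy).continuousAt).continuousWithinAt
  have hconst := constant_of_has_deriv_right_zero hcont
    (fun y hy => ((claim y (Ico_subset_Icc_self hy)).hasDerivWithinAt))
  have hgx : g x = g 0 := hconst x (right_mem_Icc.2 h0)
  have hS0 : etaS 0 = 1 := by
    rw [etaS, tsum_eq_single 0 (fun n hn => by rw [zero_pow hn, mul_zero])]
    simp [etaC_zero]
  have hg0 : g 0 = 1 := by
    rw [hgdef]; simp [hS0]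
  have hfin : etaS x * Real.sqrt (1 - x) = 1 := by
    have : g x = 1 := by rw [hgx, hg0]
    simpa [hgdef] using this
  have hsp : 0 < Real.sqrt (1 - x) := Real.sqrt_pos.2 (by linarith)
  rw [eq_div_iff hsp.ne']
  exact hfin

lemma etaIntegrable {p r : ℝ} (hp : 0 < p) (hr : 0 < r) :
    IntegrableOn (fun u : ℝ => u ^ (p - 1) * Real.exp (-(r * u))) (Ioi 0) := by
  have h1 := Real.GammaIntegral_convergent hp
  have h2 : IntegrableOn (fun u : ℝ => Real.exp (-(r * u)) * (r * u) ^ (p - 1)) (Ioi 0) := by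
    have := (integrableOn_Ioi_comp_mul_left_iff
      (fun x : ℝ => Real.exp (-x) * x ^ (p - 1)) 0 hr).2
    simpa using this (by simpa using h1)
  apply MeasureTheory.IntegrableOn.congr_fun (h2.const_mul ((1 / r) ^ (p - 1))) ?_
    measurableSet_Ioi
  intro u hu
  have hu0 : (0:ℝ) < u := hu
  have hkey : (1 / r) ^ (p - 1) * r ^ (p - 1) = 1 := by
    rw [← Real.mul_rpow (by positivity) hr.le, one_div_mul_cancel hr.ne', Real.one_rpow]
  simp only
  rw [Real.mul_rpow hr.le hu0.le]
  linear_combination (Real.exp (-(r * u)) * u ^ (p - 1)) * hkey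

lemma etaSubst {σ s : ℝ} (hσ0 : 0 < σ) (hσπ : σ < π) :
    (∫ θ in (0:ℝ)..σ, (-2 * Real.log (Real.sin (θ/2) / Real.sin (σ/2))) ^ (s-2))
      = ∫ u in Ioi (0:ℝ), u ^ (s-2) *
          (Real.sin (σ/2) * Real.exp (-(u/2)) /
            Real.sqrt (1 - Real.sin (σ/2) ^ 2 * Real.exp (-u))) := by
  have hπ := Real.pi_pos
  set z := Real.sin (σ/2) with hz
  have hσ2 : 0 < σ/2 := by linarith
  have hσ2' : σ/2 < π/2 := by linarith
  have hz0 : 0 < z := Real.sin_pos_of_pos_of_lt_pi hσ2 (by linarith)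
  have hz1 : z < 1 := by
    have h := Real.strictMonoOn_sin (a := σ/2) (b := π/2)
      ⟨by linarith, by linarith⟩ ⟨by linarith, le_refl _⟩ hσ2'
    rwa [Real.sin_pi_div_two] at h
  set φ : ℝ → ℝ := fun u => 2 * Real.arcsin (z * Real.exp (-(u/2))) with hφ
  have hqprop : ∀ u : ℝ, 0 < u → 0 < z * Real.exp (-(u/2)) ∧ z * Real.exp (-(u/2)) < z := by
    intro u hu
    have he : Real.exp (-(u/2)) < 1 := by
      rw [← Real.exp_zero]; exact Real.exp_lt_exp.2 (by linarith)
    have he0 : 0 < Real.exp (-(u/2)) := Real.exp_pos _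
    exact ⟨by positivity, by nlinarith⟩
  have hL : ∀ u ∈ Ioi (0:ℝ), -2 * Real.log (Real.sin (φ u / 2) / z) = u := by
    intro u hu
    have hu0 : (0:ℝ) < u := hu
    obtain ⟨hq0, hqz⟩ := hqprop u hu0
    have hsin : Real.sin (φ u / 2) = z * Real.exp (-(u/2)) := by
      rw [show φ u / 2 = Real.arcsin (z * Real.exp (-(u/2))) by rw [hφ]; ring]
      exact Real.sin_arcsin (by linarith) (by linarith)
    rw [hsin, mul_div_cancel_left₀ _ hz0.ne', Real.log_exp]
    ring
  have hderiv : ∀ u ∈ Ioi (0:ℝ), HasDerivAt φ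
      (-(z * Real.exp (-(u/2)) / Real.sqrt (1 - z^2 * Real.exp (-u)))) u := by
    intro u hu
    have hu0 : (0:ℝ) < u := hu
    obtain ⟨hq0, hqz⟩ := hqprop u hu0
    have hinner : HasDerivAt (fun t : ℝ => z * Real.exp (-(t/2)))
        (z * Real.exp (-(u/2)) * (-(1/2))) u := by
      have h1 : HasDerivAt (fun t : ℝ => -(t/2)) (-(1/2)) u := by
        exact ((hasDerivAt_id u).div_const 2).neg
      have h2 := (Real.hasDerivAt_exp (-(u/2))).comp u h1
      have h3 := h2.const_mul z
      refine h3.congr_deriv ?_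
      ring
    have harc := (Real.hasDerivAt_arcsin (by nlinarith) (by nlinarith : z * Real.exp (-(u/2)) ≠ 1)).comp u hinner
    have h4 := harc.const_mul 2
    have hsq : (z * Real.exp (-(u/2)))^2 = z^2 * Real.exp (-u) := by
      rw [mul_pow, sq (Real.exp _), ← Real.exp_add]
      ring_nf
    rw [hφ]
    refine h4.congr_deriv ?_
    rw [hsq]
    ring
  have hinj : InjOn φ (Ioi 0) := by
    intro a ha b hb h
    have h1 := hL a ha
    have h2 := hL b hb
    rw [← h1, ← h2, h]
  have himg : φ '' (Ioi 0) = Ioo 0 σ := by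
    apply Subset.antisymm
    · rintro θ ⟨u, hu, rfl⟩
      have hu0 : (0:ℝ) < u := hu
      obtain ⟨hq0, hqz⟩ := hqprop u hu0
      constructor
      · have := Real.arcsin_pos.2 hq0
        simp only [hφ]; linarith
      · have h1 : Real.arcsin (z * Real.exp (-(u/2))) < Real.arcsin z :=
          Real.strictMonoOn_arcsin ⟨by linarith, by linarith⟩ ⟨by linarith, hz1.le⟩ hqz
        have h2 : Real.arcsin z = σ/2 := by
          rw [hz]; exact Real.arcsin_sin (by linarith) (by linarith)
        simp only [hφ]; linarith
    · rintro θ ⟨hθ0, hθσ⟩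
      have hs0 : 0 < Real.sin (θ/2) := Real.sin_pos_of_pos_of_lt_pi (by linarith) (by linarith)
      have hsz : Real.sin (θ/2) < z :=
        Real.strictMonoOn_sin ⟨by linarith, by linarith⟩ ⟨by linarith, by linarith⟩ (by linarith)
      have hρ0 : 0 < Real.sin (θ/2) / z := by positivity
      have hρ1 : Real.sin (θ/2) / z < 1 := (div_lt_one hz0).2 hsz
      have hlogneg := Real.log_neg hρ0 hρ1
      refine ⟨-2 * Real.log (Real.sin (θ/2) / z), by simp only [mem_Ioi]; nlinarith, ?_⟩
      simp only [hφ]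
      rw [show -((-2 * Real.log (Real.sin (θ/2) / z))/2) = Real.log (Real.sin (θ/2)/z) by ring]
      rw [Real.exp_log hρ0, mul_div_cancel₀ _ hz0.ne']
      rw [Real.arcsin_sin (by linarith) (by linarith)]
      ring
  rw [intervalIntegral.integral_of_le hσ0.le, MeasureTheory.integral_Ioc_eq_integral_Ioo, ← himg,
    integral_image_eq_integral_abs_deriv_smul measurableSet_Ioi
      (fun u hu => (hderiv u hu).hasDerivWithinAt) hinj]
  apply setIntegral_congr_fun measurableSet_Ioi
  intro u hu
  have hu0 : (0:ℝ) < u := hu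
  obtain ⟨hq0, hqz⟩ := hqprop u hu0
  have heu : Real.exp (-u) < 1 := by
    rw [← Real.exp_zero]; exact Real.exp_lt_exp.2 (by linarith)
  have hD : 0 < 1 - z^2 * Real.exp (-u) := by nlinarith [Real.exp_pos (-u)]
  have hsD : 0 < Real.sqrt (1 - z^2 * Real.exp (-u)) := Real.sqrt_pos.2 hD
  dsimp only
  rw [smul_eq_mul, abs_neg, abs_of_pos (by positivity)]
  rw [hL u hu]
  ring

lemma etaKeyAlg (m : ℕ) : halfBinom m * (π * (etaC m * ((m : ℝ) + 1 / 2))) = 2 ^ (2 * m + 1) := by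
  have hπ := Real.pi_pos
  have hm2 : (0:ℝ) < (m : ℝ) + 1 / 2 := by positivity
  have hGh : 0 < Real.Gamma ((m : ℝ) + 1 / 2) := Real.Gamma_pos_of_pos hm2
  have hG2 : 0 < Real.Gamma (2 * (m : ℝ) + 1) := Real.Gamma_pos_of_pos (by positivity)
  have hF : (0:ℝ) < m.factorial := by exact_mod_cast m.factorial_pos
  have hsπ : 0 < Real.sqrt π := Real.sqrt_pos.2 hπ
  -- Γ(m+3/2) = (m+1/2)Γ(m+1/2)
  have G1 : Real.Gamma ((m : ℝ) + 3 / 2) = ((m : ℝ) + 1 / 2) * Real.Gamma ((m : ℝ) + 1 / 2) := by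
    rw [show ((m : ℝ) + 3 / 2) = ((m : ℝ) + 1 / 2) + 1 by ring, Real.Gamma_add_one hm2.ne']
  -- duplication with s = m + 1/2
  have G2 : Real.Gamma ((m : ℝ) + 1 / 2) * Real.Gamma (((m : ℝ) + 1 / 2) + 1 / 2)
      = Real.Gamma (2 * ((m : ℝ) + 1 / 2)) * (2:ℝ) ^ (1 - 2 * ((m : ℝ) + 1 / 2)) * Real.sqrt π :=
    Real.Gamma_mul_Gamma_add_half _
  have e1 : ((m : ℝ) + 1 / 2) + 1 / 2 = (m : ℝ) + 1 := by ring
  have e2 : 2 * ((m : ℝ) + 1 / 2) = 2 * (m : ℝ) + 1 := by ring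
  have e3 : (2:ℝ) ^ (1 - 2 * ((m : ℝ) + 1 / 2)) = ((2:ℝ) ^ (2 * m : ℕ))⁻¹ := by
    rw [show (1 - 2 * ((m : ℝ) + 1 / 2)) = -(2 * m : ℕ) by push_cast; ring,
      Real.rpow_neg (by norm_num), Real.rpow_natCast]
  have G4 : Real.Gamma ((m : ℝ) + 1) = m.factorial := by
    exact_mod_cast Real.Gamma_nat_eq_factorial m
  rw [e1, e3, e2, G4] at G2
  -- Γ(2m+2) = (2m+1)Γ(2m+1)
  have G3 : Real.Gamma (2 * (m : ℝ) + 2) = (2 * (m : ℝ) + 1) * Real.Gamma (2 * (m : ℝ) + 1) := by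
    rw [show (2 * (m : ℝ) + 2) = (2 * (m : ℝ) + 1) + 1 by ring,
      Real.Gamma_add_one (by positivity)]
  have hGhval : Real.Gamma ((m : ℝ) + 1 / 2)
      = Real.Gamma (2 * (m : ℝ) + 1) * ((2:ℝ) ^ (2 * m : ℕ))⁻¹ * Real.sqrt π / m.factorial := by
    field_simp at G2 ⊢
    linarith [G2]
  have hππ : Real.sqrt π * Real.sqrt π = π := Real.mul_self_sqrt hπ.le
  rw [halfBinom, etaC, G1, G3, hGhval]
  rw [show ((2:ℝ) ^ (2 * m + 1)) = 2 * ((2:ℝ) ^ (2 * m : ℕ)) by rw [pow_succ]; ring]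
  have h2m : (0:ℝ) < (2:ℝ) ^ (2 * m : ℕ) := by positivity
  field_simp
  ring_nf
  rw [Real.sq_sqrt hπ.le]


open Real in
theorem etaCB_log_sine_integral (σ s : ℝ) (hσ0 : 0 < σ) (hσπ : σ < π) (hs : 1 < s) :
    ∑' m : ℕ, (2 * Real.sin (σ / 2)) ^ (2 * m + 1) /
        (halfBinom m * ((m : ℝ) + 1 / 2) ^ s) =
      (π / Real.Gamma (s - 1)) *
        ∫ θ in (0 : ℝ)..σ,
          (-2 * Real.log (Real.sin (θ / 2) / Real.sin (σ / 2))) ^ (s - 2) := by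
  have hπ := Real.pi_pos
  set z := Real.sin (σ / 2) with hzdef
  have hσ2 : 0 < σ / 2 := by linarith
  have hz0 : 0 < z := Real.sin_pos_of_pos_of_lt_pi hσ2 (by linarith)
  have hz1 : z < 1 := by
    have h := Real.strictMonoOn_sin (a := σ/2) (b := π/2)
      ⟨by linarith, by linarith⟩ ⟨by linarith, le_refl _⟩ (by linarith)
    rwa [Real.sin_pi_div_two] at h
  have hs1 : 0 < s - 1 := by linarith
  have hΓ : 0 < Real.Gamma (s - 1) := Real.Gamma_pos_of_pos hs1
  set F : ℕ → ℝ → ℝ := fun m u => (etaC m * z ^ (2 * m + 1)) *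
    (u ^ (s - 2) * Real.exp (-(((m : ℝ) + 1 / 2) * u))) with hF
  have hint : ∀ m : ℕ, IntegrableOn (F m) (Ioi 0) := by
    intro m
    have h := (etaIntegrable hs1 (r := (m : ℝ) + 1 / 2) (by positivity)).const_mul
      (etaC m * z ^ (2 * m + 1))
    unfold IntegrableOn
    simpa [hF, show s - 1 - 1 = s - 2 by ring] using h
  have hval : ∀ m : ℕ, (∫ u in Ioi (0:ℝ), F m u)
      = (etaC m * z ^ (2 * m + 1)) *
        ((1 / ((m : ℝ) + 1 / 2)) ^ (s - 1) * Real.Gamma (s - 1)) := by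
    intro m
    rw [hF]
    simp only
    rw [MeasureTheory.integral_const_mul]
    congr 1
    have h := Real.integral_rpow_mul_exp_neg_mul_Ioi hs1 (r := (m : ℝ) + 1 / 2) (by positivity)
    rw [show s - 1 - 1 = s - 2 by ring] at h
    exact h
  have htermEq : ∀ m : ℕ, (2 * z) ^ (2 * m + 1) / (halfBinom m * ((m : ℝ) + 1 / 2) ^ s)
      = (π / Real.Gamma (s - 1)) * ∫ u in Ioi (0:ℝ), F m u := by
    intro m
    rw [hval m]
    have hA : (0:ℝ) < (m : ℝ) + 1 / 2 := by positivity
    have hAs : (0:ℝ) < ((m : ℝ) + 1 / 2) ^ s := Real.rpow_pos_of_pos hA s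
    have hAs1 : (0:ℝ) < ((m : ℝ) + 1 / 2) ^ (s - 1) := Real.rpow_pos_of_pos hA (s - 1)
    have hhb : 0 < halfBinom m := by
      rw [halfBinom]
      have h1 : 0 < Real.Gamma (2 * (m:ℝ) + 2) := Real.Gamma_pos_of_pos (by positivity)
      have h2 : 0 < Real.Gamma ((m:ℝ) + 3 / 2) := Real.Gamma_pos_of_pos (by positivity)
      positivity
    have hkey := etaKeyAlg m
    have hrp : (1 / ((m : ℝ) + 1 / 2)) ^ (s - 1)
        = ((m : ℝ) + 1 / 2) / ((m : ℝ) + 1 / 2) ^ s := by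
      rw [one_div, Real.inv_rpow hA.le, eq_div_iff hAs.ne', inv_mul_eq_div,
        ← Real.rpow_sub hA, show s - (s - 1) = 1 by ring, Real.rpow_one]
    rw [hrp, mul_pow]
    have hstep : (π / Real.Gamma (s - 1)) * ((etaC m * z ^ (2 * m + 1)) *
          (((m : ℝ) + 1 / 2) / ((m : ℝ) + 1 / 2) ^ s * Real.Gamma (s - 1)))
        = (etaC m * z ^ (2 * m + 1) * π * ((m : ℝ) + 1 / 2)) / ((m : ℝ) + 1 / 2) ^ s := by
      field_simp
    rw [hstep, div_eq_div_iff (by positivity) hAs.ne']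
    linear_combination (-(z ^ (2 * m + 1) * ((m : ℝ) + 1 / 2) ^ s)) * hkey
  have hnorm : ∀ m : ℕ, (∫ u in Ioi (0:ℝ), ‖F m u‖) = ∫ u in Ioi (0:ℝ), F m u := by
    intro m
    apply setIntegral_congr_fun measurableSet_Ioi
    intro u hu
    have hu0 : (0:ℝ) < u := hu
    have hnn : 0 ≤ F m u := by
      rw [hF]
      have := (etaC_pos m).le
      have h2 : (0:ℝ) ≤ u ^ (s - 2) := Real.rpow_nonneg hu0.le _
      positivity
    exact Real.norm_of_nonneg hnn
  have hgeo : Summable (fun m : ℕ => (2 ^ (s - 1) * Real.Gamma (s - 1)) * (z ^ 2) ^ m) := by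
    apply Summable.mul_left
    exact summable_geometric_of_lt_one (by positivity) (by nlinarith)
  have hsummable : Summable (fun m : ℕ => ∫ u in Ioi (0:ℝ), ‖F m u‖) := by
    have heq : (fun m : ℕ => ∫ u in Ioi (0:ℝ), ‖F m u‖)
        = fun m => (etaC m * z ^ (2 * m + 1)) *
          ((1 / ((m : ℝ) + 1 / 2)) ^ (s - 1) * Real.Gamma (s - 1)) :=
      funext fun m => by rw [hnorm m, hval m]
    rw [heq]
    apply Summable.of_nonneg_of_le (fun m => ?_) (fun m => ?_) hgeo
    · have h1 := (etaC_pos m).le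
      have h2 : (0:ℝ) ≤ (1 / ((m : ℝ) + 1 / 2)) ^ (s - 1) := Real.rpow_nonneg (by positivity) _
      positivity
    · have hA : (0:ℝ) < (m : ℝ) + 1 / 2 := by positivity
      have hb1 : etaC m * z ^ (2 * m + 1) ≤ (z ^ 2) ^ m := by
        have h1 : z ^ (2 * m + 1) ≤ (z ^ 2) ^ m := by
          rw [← pow_mul]
          exact pow_le_pow_of_le_one hz0.le hz1.le (by omega)
        calc etaC m * z ^ (2 * m + 1) ≤ 1 * z ^ (2 * m + 1) :=
              mul_le_mul_of_nonneg_right (etaC_le_one m) (by positivity)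
          _ = z ^ (2 * m + 1) := one_mul _
          _ ≤ (z ^ 2) ^ m := h1
      have hb2 : (1 / ((m : ℝ) + 1 / 2)) ^ (s - 1) ≤ 2 ^ (s - 1) := by
        apply Real.rpow_le_rpow (by positivity) ?_ hs1.le
        rw [div_le_iff₀ hA]
        nlinarith [Nat.cast_nonneg (α := ℝ) m]
      have h0 : (0:ℝ) ≤ etaC m * z ^ (2 * m + 1) := by
        have := (etaC_pos m).le; positivity
      calc (etaC m * z ^ (2 * m + 1)) * ((1 / ((m : ℝ) + 1 / 2)) ^ (s - 1) * Real.Gamma (s - 1))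
          ≤ (z ^ 2) ^ m * (2 ^ (s - 1) * Real.Gamma (s - 1)) := by
            apply mul_le_mul hb1 (mul_le_mul_of_nonneg_right hb2 hΓ.le) ?_ (by positivity)
            have : (0:ℝ) ≤ (1 / ((m : ℝ) + 1 / 2)) ^ (s - 1) := Real.rpow_nonneg (by positivity) _
            positivity
        _ = (2 ^ (s - 1) * Real.Gamma (s - 1)) * (z ^ 2) ^ m := by ring
  have hswap := MeasureTheory.integral_tsum_of_summable_integral_norm hint hsummable
  have hpt : ∀ u ∈ Ioi (0:ℝ), (∑' m : ℕ, F m u)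
      = u ^ (s - 2) * (z * Real.exp (-(u / 2)) / Real.sqrt (1 - z ^ 2 * Real.exp (-u))) := by
    intro u hu
    have hu0 : (0:ℝ) < u := hu
    have hx0 : 0 ≤ z ^ 2 * Real.exp (-u) := by positivity
    have heu : Real.exp (-u) < 1 := by
      rw [← Real.exp_zero]; exact Real.exp_lt_exp.2 (by linarith)
    have hx1 : z ^ 2 * Real.exp (-u) < 1 := by nlinarith [Real.exp_pos (-u)]
    have hhs := etaS_eq_sqrt hx0 hx1
    have hmul := hhs.mul_left (u ^ (s - 2) * (z * Real.exp (-(u / 2))))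
    have hsum : HasSum (fun m : ℕ => F m u)
        (u ^ (s - 2) * (z * Real.exp (-(u / 2))) *
          (1 / Real.sqrt (1 - z ^ 2 * Real.exp (-u)))) := by
      apply HasSum.congr_fun hmul
      intro n
      rw [hF]
      simp only
      have hz2 : z ^ (2 * n + 1) = z * (z ^ 2) ^ n := by
        rw [pow_add, pow_mul, pow_one]; ring
      have hexp : Real.exp (-(((n : ℝ) + 1 / 2) * u))
          = Real.exp (-(u / 2)) * (Real.exp (-u)) ^ n := by
        rw [← Real.exp_nat_mul, ← Real.exp_add]
        congr 1
        push_cast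
        ring
      rw [hz2, hexp, mul_pow]
      ring
    rw [hsum.tsum_eq]
    ring
  calc ∑' m : ℕ, (2 * z) ^ (2 * m + 1) / (halfBinom m * ((m : ℝ) + 1 / 2) ^ s)
      = ∑' m : ℕ, (π / Real.Gamma (s - 1)) * ∫ u in Ioi (0:ℝ), F m u := tsum_congr htermEq
    _ = (π / Real.Gamma (s - 1)) * ∑' m : ℕ, ∫ u in Ioi (0:ℝ), F m u := tsum_mul_left
    _ = (π / Real.Gamma (s - 1)) * ∫ u in Ioi (0:ℝ), ∑' m : ℕ, F m u := by rw [hswap]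
    _ = (π / Real.Gamma (s - 1)) * ∫ u in Ioi (0:ℝ), u ^ (s - 2) *
          (z * Real.exp (-(u / 2)) / Real.sqrt (1 - z ^ 2 * Real.exp (-u))) := by
        rw [setIntegral_congr_fun measurableSet_Ioi (fun u hu => hpt u hu)]
    _ = (π / Real.Gamma (s - 1)) *
        ∫ θ in (0 : ℝ)..σ, (-2 * Real.log (Real.sin (θ / 2) / z)) ^ (s - 2) := by
        rw [← etaSubst hσ0 hσπ]
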